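/- Let n ≥ 1 and let A ∈ ℂ^{n×n} be normal (AᴴA = AAᴴ). Then for every λ ∈ ℂ the smallest singular value of λI − A equals the distance from λ to the spectrum of A, i.e., s_n(λ) = min{|λ − μ| : μ an eigenvalue of A}; consequently, for every δ ≥ 0, Spec_δ(A) = {λ ∈ ℂ : there exists an eigenvalue μ of A with |λ − μ| ≤ δ}. -/

import Mathlib

open Matrix

/-- The operator norm of a complex matrix, induced by the Euclidean norm. -/
noncomputable def l2OpNorm {ι : Type*} [Fintype ι] [DecidableEq ι]
    (E : Matrix ι ι ℂ) : ℝ :=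
  ‖Matrix.toEuclideanCLM (𝕜 := ℂ) E‖

/-- The δ-pseudospectrum of a matrix. -/
noncomputable def pseudospectrum {ι : Type*} [Fintype ι] [DecidableEq ι]
    (δ : ℝ) (A : Matrix ι ι ℂ) : Set ℂ :=
  ⋃ E ∈ {E : Matrix ι ι ℂ | l2OpNorm E ≤ δ}, spectrum ℂ (A + E)

/-- The smallest singular value of `λI - A`. -/
noncomputable def sMin {n : ℕ} (A : Matrix (Fin n) (Fin n) ℂ) (lam : ℂ) : ℝ :=
  Real.sqrt (⨅ i, (Matrix.isHermitian_conjTranspose_mul_self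
    (lam • (1 : Matrix (Fin n) (Fin n) ℂ) - A)).eigenvalues i)

namespace PseudoSpecAux

open scoped Matrix.Norms.L2Operator ComplexOrder

noncomputable instance matCStar {n : ℕ} : CStarAlgebra (Matrix (Fin n) (Fin n) ℂ) := { }

lemma normalM {n : ℕ} (A : Matrix (Fin n) (Fin n) ℂ) (hA : Aᴴ * A = A * Aᴴ) (lam : ℂ) :
    IsStarNormal (lam • (1 : Matrix (Fin n) (Fin n) ℂ) - A) := by
  constructor
  show Commute _ _
  unfold Commute SemiconjBy
  have hs : star (lam • (1 : Matrix (Fin n) (Fin n) ℂ) - A)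
      = (starRingEnd ℂ lam) • (1 : Matrix (Fin n) (Fin n) ℂ) - Aᴴ := by
    simp [star_smul, star_eq_conjTranspose, conjTranspose_smul]
  rw [hs]
  rw [← star_eq_conjTranspose] at hA
  simp only [sub_mul, mul_sub, smul_mul_assoc, mul_smul_comm, one_mul, mul_one, smul_smul, hA,
    star_eq_conjTranspose]
  rw [show Aᴴ * A = A * Aᴴ from hA]
  module

lemma specM {n : ℕ} (A : Matrix (Fin n) (Fin n) ℂ) (lam : ℂ) :
    spectrum ℂ (lam • (1 : Matrix (Fin n) (Fin n) ℂ) - A)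
      = (fun μ : ℂ => lam - μ) '' spectrum ℂ A := by
  rw [← Algebra.algebraMap_eq_smul_one, ← spectrum.singleton_sub_eq, Set.singleton_sub]

lemma rangeEig {n : ℕ} (A : Matrix (Fin n) (Fin n) ℂ) (hA : Aᴴ * A = A * Aᴴ) (lam : ℂ) :
    Set.range (Matrix.isHermitian_conjTranspose_mul_self
      (lam • (1 : Matrix (Fin n) (Fin n) ℂ) - A)).eigenvalues
      = (fun μ : ℂ => ‖lam - μ‖ ^ 2) '' spectrum ℂ A := by
  set M := lam • (1 : Matrix (Fin n) (Fin n) ℂ) - A with hMdef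
  haveI := normalM A hA lam
  have h1 : cfc (fun z : ℂ => star z * z) M = star M * M := by
    rw [cfc_mul (fun z : ℂ => star z) (fun z : ℂ => z) M, cfc_star, cfc_id' ℂ M]
  have h2 : spectrum ℂ (Mᴴ * M) = (fun z : ℂ => star z * z) '' spectrum ℂ M := by
    rw [← star_eq_conjTranspose, ← h1]; exact cfc_map_spectrum _ M
  rw [← (Matrix.isHermitian_conjTranspose_mul_self M).spectrum_real_eq_range_eigenvalues]
  ext x
  rw [← spectrum.algebraMap_mem_iff ℂ]
  rw [h2, specM A lam]
  simp only [Set.mem_image, exists_exists_and_eq_and, Complex.coe_algebraMap]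
  constructor
  · rintro ⟨μ, hμ, h⟩
    refine ⟨μ, hμ, ?_⟩
    have := h.symm
    rw [RCLike.star_def, Complex.conj_mul'] at this
    exact_mod_cast this.symm
  · rintro ⟨μ, hμ, h⟩
    refine ⟨μ, hμ, ?_⟩
    rw [RCLike.star_def, Complex.conj_mul']
    exact_mod_cast congrArg Complex.ofReal h

lemma exists_min {n : ℕ} (hn : 1 ≤ n) (A : Matrix (Fin n) (Fin n) ℂ)
    (hA : Aᴴ * A = A * Aᴴ) (lam : ℂ) :
    ∃ μ0 ∈ spectrum ℂ A,
      (⨅ i, (Matrix.isHermitian_conjTranspose_mul_self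
        (lam • (1 : Matrix (Fin n) (Fin n) ℂ) - A)).eigenvalues i)
          = ‖lam - μ0‖ ^ 2 ∧
      IsLeast ((fun μ => ‖lam - μ‖) '' spectrum ℂ A) (‖lam - μ0‖) := by
  haveI : NeZero n := ⟨by omega⟩
  set eig := (Matrix.isHermitian_conjTranspose_mul_self
    (lam • (1 : Matrix (Fin n) (Fin n) ℂ) - A)).eigenvalues with heig
  obtain ⟨i0, -, h0⟩ := Finset.exists_min_image Finset.univ eig ⟨0, Finset.mem_univ 0⟩
  have ht : (⨅ i, eig i) = eig i0 :=
    le_antisymm (ciInf_le (Finite.bddBelow_range eig) i0)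
      (le_ciInf fun i => h0 i (Finset.mem_univ i))
  have hmem : eig i0 ∈ Set.range eig := ⟨i0, rfl⟩
  rw [rangeEig A hA lam] at hmem
  obtain ⟨μ0, hμ0, hval⟩ := hmem
  simp only at hval
  refine ⟨μ0, hμ0, by rw [ht, hval], ⟨⟨μ0, hμ0, rfl⟩, ?_⟩⟩
  rintro y ⟨μ, hμ, rfl⟩
  simp only
  have hmem2 : ‖lam - μ‖ ^ 2 ∈ Set.range eig := by
    rw [rangeEig A hA lam]; exact ⟨μ, hμ, rfl⟩
  obtain ⟨i, hi⟩ := hmem2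
  have : eig i0 ≤ eig i := h0 i (Finset.mem_univ i)
  rw [← hval, hi] at this
  exact le_of_pow_le_pow_left₀ two_ne_zero (norm_nonneg _) this

lemma psd_sub_smul {n : ℕ} (B : Matrix (Fin n) (Fin n) ℂ) (t : ℝ)
    (ht : ∀ i, t ≤ (Matrix.isHermitian_conjTranspose_mul_self B).eigenvalues i) :
    (Bᴴ * B - (t : ℂ) • 1).PosSemidef := by
  set hH := Matrix.isHermitian_conjTranspose_mul_self B
  set U := hH.eigenvectorUnitary
  have hU : (U : Matrix (Fin n) (Fin n) ℂ) * star (U : Matrix (Fin n) (Fin n) ℂ) = 1 :=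
    Matrix.mem_unitaryGroup_iff.mp U.2
  have h1 : diagonal (RCLike.ofReal ∘ hH.eigenvalues) - (t : ℂ) • (1 : Matrix (Fin n) (Fin n) ℂ)
      = diagonal (fun i => ((hH.eigenvalues i - t : ℝ) : ℂ)) := by
    ext i j
    rcases eq_or_ne i j with rfl | hij
    · simp only [Matrix.sub_apply, diagonal_apply_eq, Matrix.smul_apply, one_apply_eq, smul_eq_mul, mul_one,
        Function.comp_apply]
      push_cast [sub_eq_neg_add]
      rfl
    · simp [diagonal_apply_ne _ hij, one_apply_ne hij]
  have key : Bᴴ * B - (t : ℂ) • 1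
      = (U : Matrix (Fin n) (Fin n) ℂ) * diagonal (fun i => ((hH.eigenvalues i - t : ℝ) : ℂ))
        * star (U : Matrix (Fin n) (Fin n) ℂ) := by
    conv_lhs => rw [hH.spectral_theorem]
    rw [← h1, mul_sub, sub_mul]
    congr 1
    rw [mul_smul_comm, smul_mul_assoc, mul_one, hU]
  rw [key]
  refine Matrix.PosSemidef.mul_mul_conjTranspose_same ?_ _
  refine Matrix.posSemidef_diagonal_iff.mpr fun i => ?_
  exact_mod_cast sub_nonneg.mpr (ht i)

lemma rayleigh {n : ℕ} (B : Matrix (Fin n) (Fin n) ℂ) (t : ℝ)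
    (ht : ∀ i, t ≤ (Matrix.isHermitian_conjTranspose_mul_self B).eigenvalues i) (v : Fin n → ℂ) :
    t * ‖(WithLp.equiv 2 (Fin n → ℂ)).symm v‖ ^ 2
      ≤ ‖(WithLp.equiv 2 (Fin n → ℂ)).symm (B *ᵥ v)‖ ^ 2 := by
  have hP := (psd_sub_smul B t ht).dotProduct_mulVec_nonneg v
  have h1 : star v ⬝ᵥ ((Bᴴ * B - (t : ℂ) • 1) *ᵥ v)
      = star (B *ᵥ v) ⬝ᵥ (B *ᵥ v) - (t : ℂ) * (star v ⬝ᵥ v) := by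
    rw [sub_mulVec, dotProduct_sub]
    congr 1
    · rw [← mulVec_mulVec, dotProduct_mulVec, ← star_mulVec]
    · rw [smul_mulVec, one_mulVec, dotProduct_smul, smul_eq_mul]
  rw [h1, sub_nonneg] at hP
  have h2 : star v ⬝ᵥ v = ((‖(WithLp.equiv 2 (Fin n → ℂ)).symm v‖ : ℂ)) ^ 2 := by
    rw [dotProduct_comm, ← EuclideanSpace.inner_toLp_toLp, inner_self_eq_norm_sq_to_K]; norm_cast
  have h3 : star (B *ᵥ v) ⬝ᵥ (B *ᵥ v)
      = ((‖(WithLp.equiv 2 (Fin n → ℂ)).symm (B *ᵥ v)‖ : ℂ)) ^ 2 := by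
    rw [dotProduct_comm, ← EuclideanSpace.inner_toLp_toLp, inner_self_eq_norm_sq_to_K]; norm_cast
  rw [h2, h3] at hP
  exact_mod_cast hP

lemma exists_eigvec {n : ℕ} (A : Matrix (Fin n) (Fin n) ℂ) {μ : ℂ}
    (hμ : μ ∈ spectrum ℂ A) : ∃ v : Fin n → ℂ, v ≠ 0 ∧ A *ᵥ v = μ • v := by
  have h := spectrum.mem_iff.mp hμ
  rw [Algebra.algebraMap_eq_smul_one, Matrix.isUnit_iff_isUnit_det, isUnit_iff_ne_zero,
    not_ne_iff] at h
  obtain ⟨v, hv0, hv⟩ := (Matrix.exists_mulVec_eq_zero_iff).mpr h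
  refine ⟨v, hv0, ?_⟩
  rw [sub_mulVec, smul_mulVec, one_mulVec, sub_eq_zero] at hv
  exact hv.symm

lemma mem_spectrum_of_mulVec {n : ℕ} (B : Matrix (Fin n) (Fin n) ℂ) {lam : ℂ}
    {v : Fin n → ℂ} (hv0 : v ≠ 0) (hv : B *ᵥ v = lam • v) : lam ∈ spectrum ℂ B := by
  rw [spectrum.mem_iff, Algebra.algebraMap_eq_smul_one, Matrix.isUnit_iff_isUnit_det,
    isUnit_iff_ne_zero, not_ne_iff, ← Matrix.exists_mulVec_eq_zero_iff]
  exact ⟨v, hv0, by rw [sub_mulVec, smul_mulVec, one_mulVec, hv, sub_self]⟩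

lemma vecMulVec_mulVec' {n : ℕ} (v : Fin n → ℂ) (x : Fin n → ℂ) :
    (vecMulVec v (star v)) *ᵥ x = (star v ⬝ᵥ x) • v := by
  ext i
  simp only [mulVec, vecMulVec_apply, dotProduct, Pi.smul_apply, smul_eq_mul, Pi.star_apply]
  rw [Finset.sum_mul]
  apply Finset.sum_congr rfl
  intros j _
  ring

end PseudoSpecAux

open PseudoSpecAux in
open scoped Matrix.Norms.L2Operator in
/-- For a normal matrix `A`, the smallest singular value of `λI - A` equals the
distance from `λ` to the spectrum of `A`; consequently, for every `δ ≥ 0` the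
δ-pseudospectrum is the union of the closed δ-disks around the eigenvalues. -/
theorem normal_sMin_eq_dist_spectrum
    {n : ℕ} (hn : 1 ≤ n) (A : Matrix (Fin n) (Fin n) ℂ)
    (hA : Aᴴ * A = A * Aᴴ) :
    (∀ lam : ℂ,
      sMin A lam = sInf ((fun μ => ‖lam - μ‖) '' spectrum ℂ A)) ∧
    (∀ δ : ℝ, 0 ≤ δ →
      pseudospectrum δ A =
        {lam : ℂ | ∃ μ ∈ spectrum ℂ A, ‖lam - μ‖ ≤ δ}) := by
  have hsmin : ∀ lam : ℂ,
      IsLeast ((fun μ => ‖lam - μ‖) '' spectrum ℂ A) (sMin A lam) := by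
    intro lam
    obtain ⟨μ0, hμ0, hval, hleast⟩ := exists_min hn A hA lam
    have : sMin A lam = ‖lam - μ0‖ := by
      rw [sMin, hval, Real.sqrt_sq (norm_nonneg _)]
    rw [this]
    exact hleast
  constructor
  · intro lam
    exact ((hsmin lam).csInf_eq).symm
  · intro δ hδ
    ext lam
    simp only [pseudospectrum, Set.mem_iUnion, Set.mem_setOf_eq, exists_prop]
    constructor
    · rintro ⟨E, hE, hlam⟩
      -- extract eigenvector of A + E
      obtain ⟨v, hv0, hv⟩ := exists_eigvec (A + E) hlam
      have hMv : (lam • (1 : Matrix (Fin n) (Fin n) ℂ) - A) *ᵥ v = E *ᵥ v := by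
        rw [add_mulVec] at hv
        rw [sub_mulVec, smul_mulVec, one_mulVec, ← hv]
        abel
      obtain ⟨μ0, hμ0, hval, hleast⟩ := exists_min hn A hA lam
      refine ⟨μ0, hμ0, ?_⟩
      -- norms
      set w : EuclideanSpace ℂ (Fin n) := (WithLp.equiv 2 (Fin n → ℂ)).symm v with hw
      have hwpos : 0 < ‖w‖ := by
        rw [norm_pos_iff]
        simpa [hw] using hv0
      have hr := rayleigh (lam • (1 : Matrix (Fin n) (Fin n) ℂ) - A)
        (‖lam - μ0‖ ^ 2)
        (fun i => hval ▸ ciInf_le (Finite.bddBelow_range _) i) v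
      have hup : ‖(WithLp.equiv 2 (Fin n → ℂ)).symm
          ((lam • (1 : Matrix (Fin n) (Fin n) ℂ) - A) *ᵥ v)‖ ≤ δ * ‖w‖ := by
        rw [hMv]
        calc ‖(WithLp.equiv 2 (Fin n → ℂ)).symm (E *ᵥ v)‖
            ≤ ‖E‖ * ‖w‖ := Matrix.l2_opNorm_mulVec E w
          _ ≤ δ * ‖w‖ := by
              apply mul_le_mul_of_nonneg_right _ (norm_nonneg w)
              exact hE
      have hsq : ‖lam - μ0‖ ^ 2 * ‖w‖ ^ 2 ≤ (δ * ‖w‖) ^ 2 := by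
        refine le_trans hr ?_
        have h0 : (0 : ℝ) ≤ ‖(WithLp.equiv 2 (Fin n → ℂ)).symm
            ((lam • (1 : Matrix (Fin n) (Fin n) ℂ) - A) *ᵥ v)‖ := norm_nonneg _
        exact pow_le_pow_left₀ h0 hup 2
      rw [mul_pow] at hsq
      have h2 : ‖lam - μ0‖ ^ 2 ≤ δ ^ 2 :=
        le_of_mul_le_mul_right hsq (pow_pos hwpos 2)
      exact le_of_pow_le_pow_left₀ two_ne_zero hδ h2
    · rintro ⟨μ, hμ, hle⟩
      obtain ⟨v, hv0, hv⟩ := exists_eigvec A hμ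
      set w : EuclideanSpace ℂ (Fin n) := (WithLp.equiv 2 (Fin n → ℂ)).symm v with hw
      have hwpos : 0 < ‖w‖ := by
        rw [norm_pos_iff]
        simpa [hw] using hv0
      have hc : star v ⬝ᵥ v = ((‖w‖ : ℂ)) ^ 2 := by
        rw [dotProduct_comm, ← EuclideanSpace.inner_toLp_toLp, inner_self_eq_norm_sq_to_K]; norm_cast
      have hcne : ((‖w‖ : ℂ)) ^ 2 ≠ 0 := by
        simp [pow_eq_zero_iff, hwpos.ne']
      set c : ℂ := (lam - μ) / ((‖w‖ : ℂ)) ^ 2 with hcdef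
      set E : Matrix (Fin n) (Fin n) ℂ := c • vecMulVec v (star v) with hE
      have hEx : ∀ x : Fin n → ℂ, E *ᵥ x = (c * (star v ⬝ᵥ x)) • v := by
        intro x
        rw [hE, smul_mulVec, vecMulVec_mulVec', smul_smul]
      refine ⟨E, ?_, ?_⟩
      · -- operator norm bound
        show l2OpNorm E ≤ δ
        have hbound : ∀ x : EuclideanSpace ℂ (Fin n),
            ‖Matrix.toEuclideanCLM (𝕜 := ℂ) E x‖ ≤ ‖lam - μ‖ * ‖x‖ := by
          intro x
          have hx : Matrix.toEuclideanCLM (𝕜 := ℂ) E x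
              = (WithLp.equiv 2 (Fin n → ℂ)).symm (E *ᵥ (WithLp.equiv 2 (Fin n → ℂ) x)) := by
            rfl
          rw [hx, hEx, WithLp.equiv_symm_apply, WithLp.toLp_smul]
          have hinner : star v ⬝ᵥ (WithLp.equiv 2 (Fin n → ℂ) x) = inner ℂ w x := by
            rw [EuclideanSpace.inner_eq_star_dotProduct, dotProduct_comm]; rfl
          rw [norm_smul, hinner]
          have hCS : ‖(inner ℂ w x : ℂ)‖ ≤ ‖w‖ * ‖x‖ := norm_inner_le_norm w x
          have : ‖c * inner ℂ w x‖ ≤ ‖lam - μ‖ / ‖w‖ ^ 2 * (‖w‖ * ‖x‖) := by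
            rw [norm_mul]
            apply mul_le_mul _ hCS (norm_nonneg _) (by positivity)
            rw [hcdef, norm_div]
            apply le_of_eq
            congr 1
            rw [norm_pow, Complex.norm_real, Real.norm_eq_abs, abs_of_nonneg (norm_nonneg w)]
          calc ‖c * inner ℂ w x‖ * ‖(WithLp.equiv 2 (Fin n → ℂ)).symm v‖
              = ‖c * inner ℂ w x‖ * ‖w‖ := by rw [hw]
            _ ≤ ‖lam - μ‖ / ‖w‖ ^ 2 * (‖w‖ * ‖x‖) * ‖w‖ := by
                apply mul_le_mul_of_nonneg_right this (norm_nonneg w)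
            _ = ‖lam - μ‖ * ‖x‖ := by
                field_simp
        have := ContinuousLinearMap.opNorm_le_bound _ (norm_nonneg (lam - μ)) hbound
        exact le_trans this hle
      · -- lam in spectrum of A + E
        apply mem_spectrum_of_mulVec (A + E) hv0
        rw [add_mulVec, hv, hEx, hc, hcdef, div_mul_cancel₀ _ hcne, ← add_smul]
        congr 1
        ring
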